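/- Let s(α, β, c) := ε ∑_{i,j} exp((α_i + β_j − c_{ij})/ε) with ε > 0, fix β ∈ ℝ^n and c ∈ ℝ^{m×n} with 0 ≤ c_{ij} ≤ M_c, and suppose α* minimizes F(α) := −⟨α, μ⟩ + ε log(∑_{i,j} exp((α_i + β_j − c_{ij})/ε)) where μ ∈ ℝ^m has strictly positive entries summing to 1. Then the first-order optimality condition exp(α*_i/ε) ∑_j exp((β_j − c_{ij})/ε) / ∑_{k,j} exp((α*_k + β_j − c_{kj})/ε) = μ_i holds for all i, and max_{i,k} |α*_i − α*_k| ≤ M_c + ε log(μ_max/μ_min). -/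

import Mathlib

open Real BigOperators

theorem stmt_13 (m n : ℕ) (ε : ℝ) (hε : 0 < ε) (Mc : ℝ) (hMc : 0 ≤ Mc)
    (β : Fin n → ℝ) (c : Matrix (Fin m) (Fin n) ℝ)
    (hc : ∀ i j, 0 ≤ c i j ∧ c i j ≤ Mc)
    (μ : Fin m → ℝ) (hμpos : ∀ i, 0 < μ i) (hμsum : ∑ i, μ i = 1)
    (F : (Fin m → ℝ) → ℝ)
    (hF : F = fun α => -(∑ i, α i * μ i)
      + ε * Real.log (∑ i, ∑ j, Real.exp ((α i + β j - c i j) / ε)))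
    (αs : Fin m → ℝ) (hmin : ∀ α, F αs ≤ F α)
    (imax imin : Fin m)
    (himax : ∀ i, μ i ≤ μ imax) (himin : ∀ i, μ imin ≤ μ i) :
    (∀ i, Real.exp (αs i / ε) * (∑ j, Real.exp ((β j - c i j) / ε))
        / (∑ k, ∑ j, Real.exp ((αs k + β j - c k j) / ε)) = μ i) ∧
    ∀ i k, |αs i - αs k| ≤ Mc + ε * Real.log (μ imax / μ imin) := by
  subst hF
  have hεne : ε ≠ 0 := ne_of_gt hε
  have hm : Nonempty (Fin m) := ⟨imax⟩
  -- dispose of the case n = 0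
  rcases Nat.eq_zero_or_pos n with hn | hn
  · exfalso
    subst hn
    have hz : ∀ α : Fin m → ℝ,
        (∑ i, ∑ j : Fin 0, Real.exp ((α i + β j - c i j) / ε)) = 0 := by
      intro α; simp
    have h1 := hmin (fun k => αs k + 1)
    simp only [hz, Real.log_zero, mul_zero, add_zero, add_mul] at h1
    simp only [one_mul] at h1
    rw [Finset.sum_add_distrib, hμsum] at h1
    linarith
  have hnn : Nonempty (Fin n) := Fin.pos_iff_nonempty.mp hn
  set S : Fin m → ℝ := fun i => ∑ j, Real.exp ((β j - c i j) / ε) with hSdef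
  have hSpos : ∀ i, 0 < S i := fun i =>
    Finset.sum_pos (fun j _ => Real.exp_pos _) Finset.univ_nonempty
  have hexp : ∀ (a : ℝ) (i : Fin m) (j : Fin n),
      Real.exp ((a + β j - c i j) / ε) = Real.exp (a / ε) * Real.exp ((β j - c i j) / ε) := by
    intro a i j
    rw [← Real.exp_add]
    congr 1
    ring
  have hdouble : ∀ α : Fin m → ℝ,
      (∑ i, ∑ j, Real.exp ((α i + β j - c i j) / ε)) = ∑ i, Real.exp (α i / ε) * S i := by
    intro α
    refine Finset.sum_congr rfl fun i _ => ?_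
    rw [hSdef, Finset.mul_sum]
    exact Finset.sum_congr rfl fun j _ => hexp (α i) i j
  set T : ℝ := ∑ k, Real.exp (αs k / ε) * S k with hTdef
  have hTpos : 0 < T :=
    Finset.sum_pos (fun k _ => mul_pos (Real.exp_pos _) (hSpos k)) Finset.univ_nonempty
  set A : ℝ := ∑ k, αs k * μ k with hAdef
  -- first order condition
  have key : ∀ i, Real.exp (αs i / ε) * S i / T = μ i := by
    intro i
    set B : ℝ := Real.exp (αs i / ε) * S i with hBdef
    have hBpos : 0 < B := mul_pos (Real.exp_pos _) (hSpos i)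
    set g : ℝ → ℝ := fun t => -(A + t * μ i)
        + ε * Real.log (T + (Real.exp (t / ε) - 1) * B) with hgdef
    have hlin : ∀ t, (∑ k, Function.update αs i (αs i + t) k * μ k) = A + t * μ i := by
      intro t
      have : (∑ k, (Function.update αs i (αs i + t) k * μ k - αs k * μ k)) = t * μ i := by
        rw [Finset.sum_eq_single i]
        · simp [Function.update_self]; ring
        · intro k _ hk; simp [Function.update_of_ne hk]
        · simp
      have hsub := Finset.sum_sub_distrib (f := fun k => Function.update αs i (αs i + t) k * μ k)
        (g := fun k => αs k * μ k) (s := Finset.univ)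
      rw [hsub] at this
      rw [hAdef]; linarith
    have hquad : ∀ t, (∑ k, Real.exp (Function.update αs i (αs i + t) k / ε) * S k)
        = T + (Real.exp (t / ε) - 1) * B := by
      intro t
      have : (∑ k, (Real.exp (Function.update αs i (αs i + t) k / ε) * S k
          - Real.exp (αs k / ε) * S k)) = (Real.exp (t / ε) - 1) * B := by
        rw [Finset.sum_eq_single i]
        · rw [Function.update_self]
          have : Real.exp ((αs i + t) / ε) = Real.exp (αs i / ε) * Real.exp (t / ε) := by
            rw [← Real.exp_add]; congr 1; ring
          rw [this, hBdef]; ring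
        · intro k _ hk; simp [Function.update_of_ne hk]
        · simp
      have hsub := Finset.sum_sub_distrib
        (f := fun k => Real.exp (Function.update αs i (αs i + t) k / ε) * S k)
        (g := fun k => Real.exp (αs k / ε) * S k) (s := Finset.univ)
      rw [hsub] at this
      rw [hTdef]; linarith
    have hFt : ∀ t, (fun α => -(∑ k, α k * μ k)
        + ε * Real.log (∑ k, ∑ j, Real.exp ((α k + β j - c k j) / ε)))
          (Function.update αs i (αs i + t)) = g t := by
      intro t
      simp only [hgdef]
      rw [hdouble, hlin, hquad]
    have hg0 : g 0 = -(A + 0 * μ i) + ε * Real.log T := by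
      simp [hgdef]
    have hloc : IsLocalMin g 0 := by
      apply Filter.Eventually.of_forall
      intro t
      rw [← hFt t, ← hFt 0]
      have h0 : Function.update αs i (αs i + 0) = αs := by
        ext k; rcases eq_or_ne k i with rfl | hk
        · simp
        · simp [Function.update_of_ne hk]
      rw [h0]
      exact hmin _
    have hD : HasDerivAt g (-(1 * μ i) + ε * ((Real.exp (0 / ε) * (1 / ε) * B)
        / (T + (Real.exp ((0 : ℝ) / ε) - 1) * B))) 0 := by
      have h1 : HasDerivAt (fun t : ℝ => Real.exp (t / ε)) (Real.exp ((0 : ℝ) / ε) * (1 / ε)) 0 := by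
        have := ((hasDerivAt_id (0 : ℝ)).div_const ε).exp
        simpa using this
      have h2 : HasDerivAt (fun t : ℝ => T + (Real.exp (t / ε) - 1) * B)
          (Real.exp ((0 : ℝ) / ε) * (1 / ε) * B) 0 := by
        have := ((h1.sub_const 1).mul_const B).const_add T
        simpa using this
      have hne : T + (Real.exp ((0 : ℝ) / ε) - 1) * B ≠ 0 := by
        simp only [zero_div, Real.exp_zero, sub_self, zero_mul, add_zero]
        exact ne_of_gt hTpos
      have h3 := h2.log hne
      have h4 : HasDerivAt (fun t : ℝ => -(A + t * μ i)) (-(1 * μ i)) 0 := by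
        have := (((hasDerivAt_id (0 : ℝ)).mul_const (μ i)).const_add A).neg
        exact this
      exact h4.add (h3.const_mul ε)
    have hzero : deriv g 0 = 0 := hloc.deriv_eq_zero
    rw [hD.deriv] at hzero
    simp only [zero_div, Real.exp_zero, one_mul, sub_self, zero_mul, add_zero] at hzero
    have hTne : T ≠ 0 := ne_of_gt hTpos
    have hε' : ε * (1 / ε * B / T) = B / T := by
      have h : ε * (1 / ε) = 1 := by
        rw [mul_one_div, div_self hεne]
      calc ε * (1 / ε * B / T) = ε * (1 / ε) * (B / T) := by ring
        _ = B / T := by rw [h, one_mul]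
    linarith [hzero, hε']
  constructor
  · intro i
    rw [hdouble]
    exact key i
  · -- one-sided bound
    have hbound : ∀ i k, αs i - αs k ≤ Mc + ε * Real.log (μ imax / μ imin) := by
      intro i k
      have hSle : S k ≤ Real.exp (Mc / ε) * S i := by
        rw [hSdef, Finset.mul_sum]
        apply Finset.sum_le_sum
        intro j _
        rw [← Real.exp_add]
        apply Real.exp_le_exp.mpr
        rw [← add_div, div_le_div_iff₀ hε hε]
        have h1 := (hc i j).2
        have h2 := (hc k j).1
        nlinarith
      have hi := key i
      have hk := key k
      have hμi : Real.exp (αs i / ε) * S i = μ i * T := by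
        exact (div_eq_iff (ne_of_gt hTpos)).mp hi
      have hμk : Real.exp (αs k / ε) * S k = μ k * T := by
        exact (div_eq_iff (ne_of_gt hTpos)).mp hk
      have hTne : T ≠ 0 := ne_of_gt hTpos
      have hratio : Real.exp ((αs i - αs k) / ε) = μ i * S k / (μ k * S i) := by
        have hd : (αs i - αs k) / ε = αs i / ε - αs k / ε := by ring
        rw [hd, Real.exp_sub]
        rw [div_eq_div_iff (ne_of_gt (Real.exp_pos _))
          (ne_of_gt (mul_pos (hμpos k) (hSpos i)))]
        apply mul_left_cancel₀ hTne
        calc T * (Real.exp (αs i / ε) * (μ k * S i))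
            = (Real.exp (αs i / ε) * S i) * (μ k * T) := by ring
          _ = (μ i * T) * (μ k * T) := by rw [hμi]
          _ = (Real.exp (αs k / ε) * S k) * (μ i * T) := by rw [hμk]; ring
          _ = T * (μ i * S k * Real.exp (αs k / ε)) := by ring
      have hle : Real.exp ((αs i - αs k) / ε)
          ≤ μ imax / μ imin * Real.exp (Mc / ε) := by
        rw [hratio, div_le_iff₀ (mul_pos (hμpos k) (hSpos i)), div_mul_eq_mul_div,
          div_mul_eq_mul_div, le_div_iff₀ (hμpos imin)]
        have h1 : μ i * S k ≤ μ imax * (Real.exp (Mc / ε) * S i) :=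
          mul_le_mul (himax i) hSle (le_of_lt (hSpos k))
            (le_of_lt (lt_of_lt_of_le (hμpos i) (himax i)))
        have h2 : μ imin ≤ μ k := himin k
        have h3 : μ i * S k * μ imin ≤ μ imax * (Real.exp (Mc / ε) * S i) * μ imin :=
          mul_le_mul_of_nonneg_right h1 (le_of_lt (hμpos imin))
        have h4 : μ imax * (Real.exp (Mc / ε) * S i) * μ imin
            ≤ μ imax * (Real.exp (Mc / ε) * S i) * μ k :=
          mul_le_mul_of_nonneg_left h2
            (le_of_lt (mul_pos (hμpos imax) (mul_pos (Real.exp_pos _) (hSpos i))))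
        nlinarith [h3, h4]
      have hlog := Real.log_le_log (Real.exp_pos _) hle
      rw [Real.log_exp, Real.log_mul (ne_of_gt (div_pos (hμpos imax) (hμpos imin)))
        (ne_of_gt (Real.exp_pos _)), Real.log_exp] at hlog
      have := mul_le_mul_of_nonneg_left hlog (le_of_lt hε)
      calc αs i - αs k = ε * ((αs i - αs k) / ε) := (mul_div_cancel₀ _ hεne).symm
        _ ≤ ε * (Real.log (μ imax / μ imin) + Mc / ε) := this
        _ = Mc + ε * Real.log (μ imax / μ imin) := by
            rw [mul_add, mul_div_cancel₀ Mc hεne]; ring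
    intro i k
    rw [abs_sub_le_iff]
    exact ⟨hbound i k, hbound k i⟩
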